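/- In the vector-commitment audit game, assume (i) S_a > ((1 − p_a)/p_a)·R_a + c_a/(ε·p_a), (ii) R_a > c_a/(1 − ε), and (iii) R_s > c_s. Let J be a nonempty set of SPs with |J| < N/2. Then the honest profile σ^h is |J|-strong with respect to J: for every joint deviation σ'_J of the members of J, there exists i ∈ J with u_i(σ'_J, σ^h_{−J}) ≤ u_i(σ^h); indeed, u_i(σ'_J, σ^h_{−J}) ≤ u_i(σ^h) holds for every i ∈ J. -/

import Mathlib

/-!
Vector-commitment audit game: as the on-chain-verified audit game, except that each
on-chain audit report includes a vector commitment binding the auditor to the audit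
responses it actually received. Hence a ✓ report by an auditor who did not perform the
audit can never be backed by a valid proof at inspection time, regardless of whether
the auditee stored.
-/

open Finset

/-- A pure strategy of storage provider `i`. -/
structure Strat (N : ℕ) (i : Fin N) where
  /-- whether `i` stores its assigned data -/
  s : Bool
  /-- whether `i` audits SP `j` (at cost `c_a`) -/
  a : {j : Fin N // j ≠ i} → Bool
  /-- `i`'s reporting policy about `j`, as a function of whether a valid proof was received -/
  ρ : {j : Fin N // j ≠ i} → Bool → Bool

/-- Numerical value of a Boolean choice. -/
def b01 (b : Bool) : ℝ := if b then 1 else 0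

/-- Expected audit payoff of the auditor from one ordered pair in the vector-commitment
game: if the auditor audits (`a = 1`), the payoff is as in the on-chain-verified game;
if the auditor does not audit (`a = 0`), a ✓ report is never backable, so it earns
`(1 − p_a)·R_a − p_a·S_a` regardless of the auditee's storage bit. -/
noncomputable def pairPayoffVC (Ra ca Sa pa ε : ℝ) (sj a : Bool) (ρ : Bool → Bool) : ℝ :=
  let β : ℝ := if sj then 1 - ε else 0
  let F : ℝ := (1 - pa) * Ra - pa * Sa
  if a then β * b01 (ρ true) * Ra + (1 - β) * b01 (ρ false) * F - ca
  else b01 (ρ false) * F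

/-- The deterministic report of `i` about `j`: `r_i^j = ρ_i^j (a_i^j · s_j)`. -/
def report {N : ℕ} (σ : ∀ i : Fin N, Strat N i) (i : Fin N) (j : {j : Fin N // j ≠ i}) : Bool :=
  (σ i).ρ j ((σ i).a j && (σ j.1).s)

/-- Number of SPs `j ≠ i` whose deterministic report about `i` is ✓. -/
def trueReports {N : ℕ} (σ : ∀ i : Fin N, Strat N i) (i : Fin N) : ℕ :=
  (univ.filter fun j : {j : Fin N // j ≠ i} => report σ j.1 ⟨i, Ne.symm j.2⟩ = true).card

/-- Total (expected) utility of SP `i` in the vector-commitment audit game. -/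
noncomputable def U {N : ℕ} (Rs Ra cs ca Sa pa ε : ℝ) (σ : ∀ i : Fin N, Strat N i)
    (i : Fin N) : ℝ :=
  Rs * (if (N : ℝ) / 2 < (trueReports σ i : ℝ) then 1 else 0)
    - cs * b01 (σ i).s
    + ∑ j : {j : Fin N // j ≠ i}, pairPayoffVC Ra ca Sa pa ε (σ j.1).s ((σ i).a j) ((σ i).ρ j)

/-- The honest strategy profile: store, audit everyone, report ✓ iff a valid proof
was received. -/
def honest (N : ℕ) : ∀ i : Fin N, Strat N i :=
  fun _ => ⟨true, fun _ => true, fun _ b => b⟩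

lemma pair_le (Ra ca Sa pa ε : ℝ) (hRa : 0 < Ra) (hca : 0 < ca)
    (hε0 : 0 < ε) (hε1 : ε < 1)
    (hF : (1 - pa) * Ra - pa * Sa ≤ 0) (hP : 0 < (1 - ε) * Ra - ca)
    (sj a : Bool) (ρ : Bool → Bool) :
    pairPayoffVC Ra ca Sa pa ε sj a ρ ≤ (1 - ε) * Ra - ca := by
  rcases a with _ | _ <;> rcases sj with _ | _ <;>
    rcases hρt : ρ true with _ | _ <;> rcases hρf : ρ false with _ | _ <;>
    simp [pairPayoffVC, b01, hρt, hρf] <;> nlinarith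

/-- In the vector-commitment audit game, under the strict conditions
(i) `S_a > ((1 − p_a)/p_a)·R_a + c_a/(ε·p_a)`, (ii) `R_a > c_a/(1 − ε)`, and
(iii) `R_s > c_s`, for any nonempty coalition `J` with `|J| < N/2`, the honest profile is
`|J|`-strong with respect to `J`: for every joint deviation of the members of `J`
(non-members keep playing honestly), some member of `J` is weakly worse off; indeed every
member of `J` is weakly worse off. -/
theorem vc_honest_strong_equilibrium
    (N : ℕ) (hN : 3 ≤ N) (Rs Ra cs ca Sa pa ε : ℝ)
    (hRs : 0 < Rs) (hRa : 0 < Ra) (hcs : 0 < cs) (hca : 0 < ca) (hSa : 0 ≤ Sa)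
    (hpa0 : 0 < pa) (hpa1 : pa ≤ 1) (hε0 : 0 < ε) (hε1 : ε < 1)
    (h1 : ((1 - pa) / pa) * Ra + ca / (ε * pa) < Sa)
    (h2 : ca / (1 - ε) < Ra)
    (h3 : cs < Rs)
    (J : Finset (Fin N)) (hJne : J.Nonempty) (hJ : (J.card : ℝ) < (N : ℝ) / 2)
    (σ : ∀ i : Fin N, Strat N i) (hσ : ∀ i ∉ J, σ i = honest N i) :
    (∃ i ∈ J, U Rs Ra cs ca Sa pa ε σ i ≤ U Rs Ra cs ca Sa pa ε (honest N) i) ∧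
    ∀ i ∈ J, U Rs Ra cs ca Sa pa ε σ i ≤ U Rs Ra cs ca Sa pa ε (honest N) i := by
  classical
  have h1ε : 0 < 1 - ε := by linarith
  have hP : 0 < (1 - ε) * Ra - ca := by
    have := (div_lt_iff₀ h1ε).mp h2
    nlinarith
  have hF : (1 - pa) * Ra - pa * Sa ≤ 0 := by
    have h1' := mul_lt_mul_of_pos_right h1 hpa0
    have e1 : ((1 - pa) / pa * Ra + ca / (ε * pa)) * pa
        = (1 - pa) * Ra + ca / ε := by
      field_simp
    rw [e1] at h1'
    have hce : 0 < ca / ε := div_pos hca hε0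
    nlinarith
  have hcard : ∀ i : Fin N, Fintype.card {j : Fin N // j ≠ i} = N - 1 := by
    intro i
    have : Fintype.card {j : Fin N // ¬ (j = i)} = N - 1 := by
      rw [Fintype.card_subtype_compl]
      simp
    simpa using this
  have hN3 : (3 : ℝ) ≤ (N : ℝ) := by exact_mod_cast hN
  have hNR : (N : ℝ) / 2 < ((N - 1 : ℕ) : ℝ) := by
    rw [Nat.cast_sub (by omega)]
    push_cast
    linarith
  -- honest utility
  have hUh : ∀ i : Fin N, U Rs Ra cs ca Sa pa ε (honest N) i
      = Rs - cs + ((N - 1 : ℕ) : ℝ) * ((1 - ε) * Ra - ca) := by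
    intro i
    have htr : trueReports (honest N) i = N - 1 := by
      unfold trueReports
      rw [Finset.filter_true_of_mem (fun j _ => by simp [report, honest])]
      simp [hcard i]
    have hsum : ∑ j : {j : Fin N // j ≠ i},
        pairPayoffVC Ra ca Sa pa ε ((honest N) j.1).s (((honest N) i).a j)
          (((honest N) i).ρ j)
        = ((N - 1 : ℕ) : ℝ) * ((1 - ε) * Ra - ca) := by
      rw [Finset.sum_congr rfl
        (fun j _ => show _ = (1 - ε) * Ra - ca by
          simp [honest, pairPayoffVC, b01])]
      simp [Finset.card_univ, hcard i, mul_comm]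
      ring
    unfold U
    rw [htr, hsum, if_pos hNR]
    simp [honest, b01]
  have hall : ∀ i ∈ J, U Rs Ra cs ca Sa pa ε σ i ≤ U Rs Ra cs ca Sa pa ε (honest N) i := by
    intro i hiJ
    have hsumle : ∑ j : {j : Fin N // j ≠ i},
        pairPayoffVC Ra ca Sa pa ε ((σ j.1)).s (((σ i)).a j) (((σ i)).ρ j)
        ≤ ((N - 1 : ℕ) : ℝ) * ((1 - ε) * Ra - ca) := by
      calc ∑ j : {j : Fin N // j ≠ i},
          pairPayoffVC Ra ca Sa pa ε ((σ j.1)).s (((σ i)).a j) (((σ i)).ρ j)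
          ≤ ∑ _j : {j : Fin N // j ≠ i}, ((1 - ε) * Ra - ca) :=
            Finset.sum_le_sum (fun j _ =>
              pair_le Ra ca Sa pa ε hRa hca hε0 hε1 hF hP _ _ _)
        _ = ((N - 1 : ℕ) : ℝ) * ((1 - ε) * Ra - ca) := by
            simp [Finset.card_univ, hcard i, mul_comm]
            ring
    rw [hUh i]
    unfold U
    rcases hs : (σ i).s with _ | _
    · -- deviator does not store: loses the majority reward
      have htr : trueReports σ i ≤ J.card := by
        unfold trueReports
        apply Finset.card_le_card_of_injOn (fun j => j.1)
        · intro j hj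
          simp only [Finset.mem_coe, Finset.mem_filter, Finset.mem_univ, true_and] at hj
          by_contra hjJ
          rw [report, hσ j.1 hjJ] at hj
          simp [honest, hs] at hj
        · intro a _ b _ h
          exact Subtype.ext h
      have hind : ¬ ((N : ℝ) / 2 < (trueReports σ i : ℝ)) := by
        push_neg
        calc (trueReports σ i : ℝ) ≤ (J.card : ℝ) := by exact_mod_cast htr
          _ ≤ (N : ℝ) / 2 := le_of_lt hJ
      rw [if_neg hind]
      simp only [b01]
      norm_num
      linarith
    · -- deviator stores
      have hind : (if (N : ℝ) / 2 < (trueReports σ i : ℝ) then (1:ℝ) else 0) ≤ 1 := by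
        split_ifs <;> norm_num
      have := mul_le_mul_of_nonneg_left hind hRs.le
      simp only [b01, if_pos]
      linarith
  obtain ⟨i0, hi0⟩ := hJne
  exact ⟨⟨i0, hi0, hall i0 hi0⟩, hall⟩
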